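/- Let p be a prime and let t and k both be powers of p. Then the multicolor Ramsey number satisfies r_k(K_{2,t+1}) ≥ t·k^2 + 1. Moreover, for every positive integer k and every positive integer t, r_k(K_{2,t+1}) ≤ t·k^2 + k + 2; and if k is a prime power, then r_k(C_4) ≥ k^2 + 2. -/

import Mathlib

open Finset

/-- `N` is Ramsey for `G` with `n` colors: every `n`-coloring of the edges of the complete
graph `K_N` contains a monochromatic copy of `G`. -/
def IsRamseyFor {α : Type} (G : SimpleGraph α) (n N : ℕ) : Prop :=
  ∀ c : Sym2 (Fin N) → Fin n,
    ∃ (i : Fin n) (φ : α → Fin N), Function.Injective φ ∧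
      ∀ u v, G.Adj u v → c s(φ u, φ v) = i

/-- The multicolor Ramsey number `r_n(G)`: the minimum `N` such that every `n`-coloring of
the edges of `K_N` yields a monochromatic copy of `G`. -/
noncomputable def multiRamsey {α : Type} (G : SimpleGraph α) (n : ℕ) : ℕ :=
  sInf {N | IsRamseyFor G n N}

lemma isRamseyFor_mono {α : Type} {G : SimpleGraph α} {n N M : ℕ}
    (h : IsRamseyFor G n N) (hNM : N ≤ M) : IsRamseyFor G n M := by
  intro c
  obtain ⟨i, φ, hinj, hmono⟩ := h (fun e => c (e.map (Fin.castLE hNM)))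
  refine ⟨i, Fin.castLE hNM ∘ φ, (Fin.castLE_injective hNM).comp hinj, fun u v huv => ?_⟩
  have := hmono u v huv
  rwa [Sym2.map_pair_eq] at this

lemma upper_bound (k t : ℕ) (hk : 0 < k) (ht : 0 < t) :
    IsRamseyFor (completeBipartiteGraph (Fin 2) (Fin (t + 1))) k (t * k ^ 2 + k + 2) := by
  set N := t * k ^ 2 + k + 2 with hNdef
  intro c
  by_contra hcon
  push_neg at hcon
  -- Step 1 : common-neighbourhood bound
  have key : ∀ u v : Fin N, u ≠ v →
      #(univ.filter fun x : Fin N => x ≠ u ∧ x ≠ v ∧ c s(x, u) = c s(x, v)) ≤ t * k := by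
    intro u v huv
    set S := univ.filter fun x : Fin N => x ≠ u ∧ x ≠ v ∧ c s(x, u) = c s(x, v) with hS
    have hfib : ∀ i ∈ S.image (fun x => c s(x, u)), #{x ∈ S | c s(x, u) = i} ≤ t := by
      intro i _
      by_contra hbig
      push_neg at hbig
      obtain ⟨A, hAsub, hAcard⟩ := Finset.exists_subset_card_eq hbig
      have hAmem : ∀ y : A, (y : Fin N) ≠ u ∧ (y : Fin N) ≠ v ∧
          c s((y : Fin N), u) = i ∧ c s((y : Fin N), v) = i := by
        rintro ⟨y, hy⟩
        have := hAsub hy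
        simp only [hS, Finset.mem_filter, Finset.mem_univ, true_and] at this
        exact ⟨this.1.1, this.1.2.1, this.2, this.2 ▸ this.1.2.2.symm⟩
      set g : Fin (t + 1) → Fin N :=
        fun j => (A.equivFin.symm (finCongr hAcard.symm j) : Fin N) with hg
      have hgprop : ∀ j : Fin (t + 1), g j ≠ u ∧ g j ≠ v ∧
          c s(g j, u) = i ∧ c s(g j, v) = i :=
        fun j => hAmem (A.equivFin.symm (finCongr hAcard.symm j))
      have hginj : Function.Injective g := fun j j' h =>
        (finCongr hAcard.symm).injective (A.equivFin.symm.injective (Subtype.val_injective h))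
      set φ : Fin 2 ⊕ Fin (t + 1) → Fin N := Sum.elim ![u, v] g with hφ
      have hφinj : Function.Injective φ := by
        rintro (x | x) (y | y) hxy
        · simp only [hφ, Sum.elim_inl] at hxy
          congr 1
          fin_cases x <;> fin_cases y <;> simp_all
        · exfalso
          simp only [hφ, Sum.elim_inl, Sum.elim_inr] at hxy
          have h := hgprop y
          fin_cases x
          · exact h.1 (by simpa using hxy.symm)
          · exact h.2.1 (by simpa using hxy.symm)
        · exfalso
          simp only [hφ, Sum.elim_inl, Sum.elim_inr] at hxy
          have h := hgprop x
          fin_cases y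
          · exact h.1 (by simpa using hxy)
          · exact h.2.1 (by simpa using hxy)
        · simp only [hφ, Sum.elim_inr] at hxy
          exact congrArg Sum.inr (hginj hxy)
      obtain ⟨u', v', hadj, hnei⟩ := hcon i φ hφinj
      apply hnei
      rcases u' with x | x <;> rcases v' with y | y
      · simp at hadj
      · have h := hgprop y
        have hswap : s(φ (Sum.inl x), φ (Sum.inr y)) = s(g y, ![u, v] x) := by
          simp only [hφ, Sum.elim_inl, Sum.elim_inr]
          exact Sym2.eq_swap
        rw [hswap]
        fin_cases x
        · simpa using h.2.2.1
        · simpa using h.2.2.2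
      · have h := hgprop x
        have heq : s(φ (Sum.inr x), φ (Sum.inl y)) = s(g x, ![u, v] y) := by
          simp only [hφ, Sum.elim_inl, Sum.elim_inr]
        rw [heq]
        fin_cases y
        · simpa using h.2.2.1
        · simpa using h.2.2.2
      · simp at hadj
    calc #S ≤ t * #(S.image fun x => c s(x, u)) := Finset.card_le_mul_card_image S t hfib
      _ ≤ t * k := by
          have : #(S.image fun x => c s(x, u)) ≤ k := by
            simpa using Finset.card_le_card (Finset.subset_univ (S.image fun x => c s(x, u)))
          exact Nat.mul_le_mul_left t this
  -- Step 2 : per-vertex Cauchy–Schwarz bound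
  have perx : ∀ x : Fin N, (N - 1) ^ 2 ≤
      k * #((univ ×ˢ univ).filter fun p : Fin N × Fin N =>
        x ≠ p.1 ∧ x ≠ p.2 ∧ c s(x, p.1) = c s(x, p.2)) := by
    intro x
    set d : Fin k → ℕ := fun i => #(univ.filter fun u : Fin N => x ≠ u ∧ c s(x, u) = i) with hd
    have hsum : ∑ i, d i = N - 1 := by
      have h1 : #(univ.filter fun u : Fin N => x ≠ u) = N - 1 := by
        rw [Finset.filter_ne, Finset.card_erase_of_mem (mem_univ x), Finset.card_univ,
          Fintype.card_fin]
      rw [← h1, Finset.card_eq_sum_card_fiberwise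
        (f := fun u => c s(x, u)) (t := (univ : Finset (Fin k))) (fun _ _ => mem_univ _)]
      apply Finset.sum_congr rfl
      intro i _
      rw [hd, Finset.filter_filter]
    have hUx : #((univ ×ˢ univ).filter fun p : Fin N × Fin N =>
        x ≠ p.1 ∧ x ≠ p.2 ∧ c s(x, p.1) = c s(x, p.2)) = ∑ i, d i ^ 2 := by
      rw [Finset.card_eq_sum_card_fiberwise
        (f := fun p => c s(x, p.1)) (t := (univ : Finset (Fin k))) (fun _ _ => mem_univ _)]
      apply Finset.sum_congr rfl
      intro i _
      have heq : ((univ ×ˢ univ).filter fun p : Fin N × Fin N =>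
            x ≠ p.1 ∧ x ≠ p.2 ∧ c s(x, p.1) = c s(x, p.2)).filter (fun p => c s(x, p.1) = i)
          = (univ.filter fun u : Fin N => x ≠ u ∧ c s(x, u) = i) ×ˢ
            (univ.filter fun u : Fin N => x ≠ u ∧ c s(x, u) = i) := by
        rw [Finset.filter_filter]
        ext ⟨u, v⟩
        simp only [Finset.mem_filter, Finset.mem_product, Finset.mem_univ, true_and]
        constructor
        · rintro ⟨⟨h1, h2, h3⟩, h4⟩
          exact ⟨⟨h1, h4⟩, ⟨h2, h3.symm.trans h4⟩⟩
        · rintro ⟨⟨h1, h4⟩, ⟨h2, h5⟩⟩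
          exact ⟨⟨h1, h2, h4.trans h5.symm⟩, h4⟩
      rw [heq, Finset.card_product, hd, sq]
    calc (N - 1) ^ 2 = (∑ i, d i) ^ 2 := by rw [hsum]
      _ ≤ #(univ : Finset (Fin k)) * ∑ i, d i ^ 2 := sq_sum_le_card_mul_sum_sq
      _ = k * _ := by rw [Finset.card_univ, Fintype.card_fin, hUx]
  -- Step 3 : double counting
  have swap : ∑ x : Fin N, #((univ ×ˢ univ).filter fun p : Fin N × Fin N =>
        x ≠ p.1 ∧ x ≠ p.2 ∧ c s(x, p.1) = c s(x, p.2))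
      = ∑ p ∈ (univ ×ˢ univ : Finset (Fin N × Fin N)),
          #(univ.filter fun x : Fin N => x ≠ p.1 ∧ x ≠ p.2 ∧ c s(x, p.1) = c s(x, p.2)) := by
    simp_rw [Finset.card_filter]
    exact Finset.sum_comm
  have hNN : N * N - N = N * (N - 1) := by
    obtain ⟨M, hM⟩ : ∃ M, N = M + 1 := ⟨t * k ^ 2 + k + 1, by omega⟩
    rw [hM]
    have : (M + 1) * (M + 1) = (M + 1) * M + (M + 1) := by ring
    rw [this, Nat.succ_sub_one, Nat.add_sub_cancel]
  have bound : ∑ p ∈ (univ ×ˢ univ : Finset (Fin N × Fin N)),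
      #(univ.filter fun x : Fin N => x ≠ p.1 ∧ x ≠ p.2 ∧ c s(x, p.1) = c s(x, p.2))
      ≤ N * (N - 1) * (t * k) + N * (N - 1) := by
    rw [← Finset.sum_filter_add_sum_filter_not (univ ×ˢ univ)
      (fun p : Fin N × Fin N => p.1 ≠ p.2)]
    have b1 : ∑ p ∈ (univ ×ˢ univ : Finset (Fin N × Fin N)).filter (fun p => p.1 ≠ p.2),
        #(univ.filter fun x : Fin N => x ≠ p.1 ∧ x ≠ p.2 ∧ c s(x, p.1) = c s(x, p.2))
        ≤ N * (N - 1) * (t * k) := by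
      have hcard : #((univ ×ˢ univ : Finset (Fin N × Fin N)).filter (fun p => p.1 ≠ p.2))
          = N * (N - 1) := by
        have : ((univ ×ˢ univ : Finset (Fin N × Fin N)).filter (fun p => p.1 ≠ p.2))
            = (univ : Finset (Fin N)).offDiag := by ext; simp
        rw [this, Finset.offDiag_card, Finset.card_univ, Fintype.card_fin, hNN]
      calc _ ≤ ∑ _p ∈ (univ ×ˢ univ : Finset (Fin N × Fin N)).filter (fun p => p.1 ≠ p.2),
            t * k := by
            apply Finset.sum_le_sum
            intro p hp
            have hne : p.1 ≠ p.2 := (Finset.mem_filter.mp hp).2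
            exact key p.1 p.2 hne
        _ = N * (N - 1) * (t * k) := by rw [Finset.sum_const, hcard, smul_eq_mul]
    have b2 : ∑ p ∈ (univ ×ˢ univ : Finset (Fin N × Fin N)).filter (fun p => ¬p.1 ≠ p.2),
        #(univ.filter fun x : Fin N => x ≠ p.1 ∧ x ≠ p.2 ∧ c s(x, p.1) = c s(x, p.2))
        ≤ N * (N - 1) := by
      have hcard : #((univ ×ˢ univ : Finset (Fin N × Fin N)).filter (fun p => ¬p.1 ≠ p.2)) ≤ N := by
        have := Finset.card_le_card_of_injOn (fun p : Fin N × Fin N => p.1)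
          (s := (univ ×ˢ univ : Finset (Fin N × Fin N)).filter (fun p => ¬p.1 ≠ p.2))
          (t := (univ : Finset (Fin N))) (fun _ _ => mem_univ _) ?_
        · simpa using this
        · intro p hp q hq hpq
          simp only [Finset.coe_filter, Set.mem_setOf_eq, not_not] at hp hq
          exact Prod.ext hpq (hp.2 ▸ hq.2 ▸ hpq)
      calc _ ≤ ∑ _p ∈ (univ ×ˢ univ : Finset (Fin N × Fin N)).filter (fun p => ¬p.1 ≠ p.2),
            (N - 1) := by
            apply Finset.sum_le_sum
            intro p _
            calc #(univ.filter fun x : Fin N => x ≠ p.1 ∧ x ≠ p.2 ∧ c s(x, p.1) = c s(x, p.2))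
                ≤ #(univ.filter fun x : Fin N => x ≠ p.1) :=
                  Finset.card_le_card (fun y hy => by
                    simp only [Finset.mem_filter] at hy ⊢; exact ⟨hy.1, hy.2.1⟩)
              _ = N - 1 := by
                  rw [Finset.filter_ne', Finset.card_erase_of_mem (mem_univ p.1),
                    Finset.card_univ, Fintype.card_fin]
        _ ≤ N * (N - 1) := by
            rw [Finset.sum_const, smul_eq_mul]
            exact Nat.mul_le_mul_right _ hcard
    exact Nat.add_le_add b1 b2
  -- Final arithmetic contradiction
  have big : N * (N - 1) ^ 2 ≤ k * (N * (N - 1) * (t * k) + N * (N - 1)) := by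
    calc N * (N - 1) ^ 2 = ∑ _x : Fin N, (N - 1) ^ 2 := by
          rw [Finset.sum_const, Finset.card_univ, Fintype.card_fin, smul_eq_mul]
      _ ≤ ∑ x : Fin N, k * #((univ ×ˢ univ).filter fun p : Fin N × Fin N =>
            x ≠ p.1 ∧ x ≠ p.2 ∧ c s(x, p.1) = c s(x, p.2)) :=
          Finset.sum_le_sum (fun x _ => perx x)
      _ = k * ∑ x : Fin N, #((univ ×ˢ univ).filter fun p : Fin N × Fin N =>
            x ≠ p.1 ∧ x ≠ p.2 ∧ c s(x, p.1) = c s(x, p.2)) := by rw [Finset.mul_sum]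
      _ = k * ∑ p ∈ (univ ×ˢ univ : Finset (Fin N × Fin N)),
          #(univ.filter fun x : Fin N => x ≠ p.1 ∧ x ≠ p.2 ∧ c s(x, p.1) = c s(x, p.2)) := by
          rw [swap]
      _ ≤ k * (N * (N - 1) * (t * k) + N * (N - 1)) := Nat.mul_le_mul_left k bound
  have h2 : N * (N - 1) * (N - 1) ≤ N * (N - 1) * (t * k ^ 2 + k) := by
    calc N * (N - 1) * (N - 1) = N * (N - 1) ^ 2 := by ring
      _ ≤ k * (N * (N - 1) * (t * k) + N * (N - 1)) := big
      _ = N * (N - 1) * (t * k ^ 2 + k) := by ring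
  have htk : 0 < t * k ^ 2 := by positivity
  have hpos : 0 < N * (N - 1) := Nat.mul_pos (by omega) (by omega)
  have hfin := Nat.le_of_mul_le_mul_left (by
    calc N * (N - 1) * (N - 1) = N * (N - 1) * (N - 1) := rfl
      _ ≤ N * (N - 1) * (t * k ^ 2 + k) := h2) hpos
  omega

lemma lower_bipartite (p a b : ℕ) (hp : p.Prime) (hab : a + b ≠ 0) :
    ¬ IsRamseyFor (completeBipartiteGraph (Fin 2) (Fin (p ^ a + 1))) (p ^ b)
      (p ^ a * (p ^ b) ^ 2) := by
  haveI : Fact p.Prime := ⟨hp⟩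
  set t := p ^ a with htdef
  set k := p ^ b with hkdef
  set F := GaloisField p (a + b) with hF
  letI : Fintype F := Fintype.ofFinite F
  have cardF : Fintype.card F = p ^ (a + b) := by
    have := GaloisField.card p (a + b) hab
    rwa [Nat.card_eq_fintype_card] at this
  have hfr : Module.finrank (ZMod p) F = a + b := GaloisField.finrank p hab
  set B : Module.Basis (Fin (a + b)) (ZMod p) F := Module.finBasisOfFinrankEq (ZMod p) F hfr with hB
  set E : F ≃ₗ[ZMod p] (Fin (a + b) → ZMod p) := B.equivFun with hE
  have cardW : Fintype.card (Fin b → ZMod p) = k := by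
    rw [Fintype.card_fun, ZMod.card, Fintype.card_fin, hkdef]
  set g : F → (Fin b → ZMod p) := fun x j => E x (finSumFinEquiv (Sum.inr j)) with hg
  have gsub : ∀ x y : F, g (x - y) = g x - g y := by
    intro x y
    funext j
    simp [hg, map_sub, Pi.sub_apply]
  have fiber : ∀ w : Fin b → ZMod p, #(univ.filter fun z : F => g z = w) ≤ t := by
    intro w
    have h1 := Finset.card_le_card_of_injOn
      (f := fun z : F => fun j : Fin a => E z (finSumFinEquiv (Sum.inl j)))
      (s := univ.filter fun z : F => g z = w) (t := (univ : Finset (Fin a → ZMod p)))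
      (fun _ _ => mem_univ _) ?_
    · calc #(univ.filter fun z : F => g z = w) ≤ #(univ : Finset (Fin a → ZMod p)) := h1
        _ = t := by rw [Finset.card_univ, Fintype.card_fun, ZMod.card, Fintype.card_fin, htdef]
    · intro z hz z' hz' hzz
      simp only [Finset.coe_filter, Set.mem_setOf_eq, Finset.mem_univ, true_and] at hz hz'
      apply E.injective
      funext i
      obtain ⟨s, rfl⟩ := finSumFinEquiv.surjective i
      cases s with
      | inl j => exact congrFun hzz j
      | inr j =>
        have : g z j = g z' j := by rw [hz, hz']
        simpa [hg] using this
  have cardV : Fintype.card (F × (Fin b → ZMod p)) = t * k ^ 2 := by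
    rw [Fintype.card_prod, cardF, cardW, htdef, hkdef, pow_add]
    ring
  set e : Fin (t * k ^ 2) ≃ F × (Fin b → ZMod p) := (Fintype.equivFinOfCardEq cardV).symm with he
  set ε : (Fin b → ZMod p) ≃ Fin k := Fintype.equivFinOfCardEq cardW with hε
  set χ : Sym2 (Fin (t * k ^ 2)) → Fin k := Sym2.lift
    ⟨fun x y => ε ((e x).2 + (e y).2 - g ((e x).1 * (e y).1)), by
      intro x y
      dsimp only
      rw [add_comm ((e x).2), mul_comm ((e x).1)]⟩ with hχ
  intro h
  obtain ⟨i, φ, hinj, hmono⟩ := h χ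
  set s₀ : Fin b → ZMod p := ε.symm i with hs₀
  set u : F × (Fin b → ZMod p) := e (φ (Sum.inl 0)) with hu
  set v : F × (Fin b → ZMod p) := e (φ (Sum.inl 1)) with hv
  set y : Fin (t + 1) → F × (Fin b → ZMod p) := fun j => e (φ (Sum.inr j)) with hy
  have col : ∀ (x : Fin 2) (j : Fin (t + 1)),
      (y j).2 + (e (φ (Sum.inl x))).2 - g ((y j).1 * (e (φ (Sum.inl x))).1) = s₀ := by
    intro x j
    have hadj : (completeBipartiteGraph (Fin 2) (Fin (t + 1))).Adj (Sum.inr j) (Sum.inl x) := by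
      simp
    have hc := hmono _ _ hadj
    rw [hχ, Sym2.lift_mk] at hc
    exact ε.eq_symm_apply.mpr hc
  have colu : ∀ j : Fin (t + 1), (y j).2 + u.2 - g ((y j).1 * u.1) = s₀ := fun j => col 0 j
  have colv : ∀ j : Fin (t + 1), (y j).2 + v.2 - g ((y j).1 * v.1) = s₀ := fun j => col 1 j
  have huv : u ≠ v := by
    intro hEq
    have := hinj (e.injective hEq)
    simp at this
  have hkey : ∀ j, g ((y j).1 * (u.1 - v.1)) = u.2 - v.2 := by
    intro j
    have h0 := colu j
    have h1 := colv j
    rw [mul_sub, gsub]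
    linear_combination h1 - h0
  by_cases hc : u.1 = v.1
  · apply huv
    have h20 := hkey 0
    rw [hc, sub_self, mul_zero] at h20
    have hg0 : g 0 = 0 := by
      have := gsub 0 0
      simpa using this
    rw [hg0] at h20
    have : u.2 = v.2 := by
      have := h20.symm
      rwa [sub_eq_zero] at this
    exact Prod.ext hc this
  · have hyinj : ∀ j j' : Fin (t + 1), (y j).1 = (y j').1 → j = j' := by
      intro j j' hjj
      have h0 := colu j
      have h0' := colu j'
      rw [hjj] at h0
      have h2nd : (y j).2 = (y j').2 := by linear_combination h0 - h0'
      have : y j = y j' := Prod.ext hjj h2nd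
      exact Sum.inr.inj (hinj (e.injective this))
    have hcard := Finset.card_le_card_of_injOn
      (f := fun j : Fin (t + 1) => (y j).1 * (u.1 - v.1))
      (s := (univ : Finset (Fin (t + 1))))
      (t := univ.filter fun z : F => g z = u.2 - v.2)
      (fun j _ => Finset.mem_filter.mpr ⟨mem_univ _, hkey j⟩) ?_
    · have : t + 1 ≤ t := by
        calc t + 1 = #(univ : Finset (Fin (t + 1))) := by
              rw [Finset.card_univ, Fintype.card_fin]
          _ ≤ #(univ.filter fun z : F => g z = u.2 - v.2) := hcard
          _ ≤ t := fiber _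
      omega
    · intro j _ j' _ hjj
      apply hyinj
      have hne : u.1 - v.1 ≠ 0 := sub_ne_zero.mpr hc
      exact mul_right_cancel₀ hne hjj

lemma lower_C4 (q n : ℕ) (hq : q.Prime) (hn : n ≠ 0) :
    ¬ IsRamseyFor (SimpleGraph.cycleGraph 4) (q ^ n) ((q ^ n) ^ 2 + 1) := by
  haveI : Fact q.Prime := ⟨hq⟩
  set K := q ^ n with hK
  set F := GaloisField q n with hF
  letI : Fintype F := Fintype.ofFinite F
  have cardF : Fintype.card F = K := by
    have := GaloisField.card q n hn
    rwa [Nat.card_eq_fintype_card] at this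
  have cardV : Fintype.card (Option (F × F)) = K ^ 2 + 1 := by
    rw [Fintype.card_option, Fintype.card_prod, cardF, sq]
  set e : Fin (K ^ 2 + 1) ≃ Option (F × F) := (Fintype.equivFinOfCardEq cardV).symm with he
  set ε : F ≃ Fin K := Fintype.equivFinOfCardEq cardF with hε
  set col : Option (F × F) → Option (F × F) → F := fun x y =>
    match x, y with
    | some (a, b), some (c, d) => b + d - a * c
    | none, some (a, _) => a
    | some (a, _), none => a
    | none, none => 0 with hcol
  have hcolsymm : ∀ x y, col x y = col y x := by
    rintro (_ | ⟨a, b⟩) (_ | ⟨c, d⟩) <;> simp only [hcol] <;> ring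
  set χ : Sym2 (Fin (K ^ 2 + 1)) → Fin K := Sym2.lift
    ⟨fun x y => ε (col (e x) (e y)),
      fun x y => congrArg ε (hcolsymm (e x) (e y))⟩ with hχ
  intro h
  obtain ⟨i, φ, hinj, hmono⟩ := h χ
  set s₀ : F := ε.symm i with hs₀
  set v : Fin 4 → Option (F × F) := fun m => e (φ m) with hv
  have hdist : ∀ m m' : Fin 4, v m = v m' → m = m' := by
    intro m m' hmm
    exact hinj (e.injective hmm)
  have hcol4 : ∀ m m' : Fin 4, (SimpleGraph.cycleGraph 4).Adj m m' →
      col (v m) (v m') = s₀ := by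
    intro m m' hadj
    have hc := hmono _ _ hadj
    rw [hχ, Sym2.lift_mk] at hc
    exact ε.eq_symm_apply.mpr hc
  have E01 := hcol4 0 1 (by decide)
  have E12 := hcol4 1 2 (by decide)
  have E23 := hcol4 2 3 (by decide)
  have E30 := hcol4 3 0 (by decide)
  have h02 : v 0 ≠ v 2 := fun hc => by simpa using hdist 0 2 hc
  have h13 : v 1 ≠ v 3 := fun hc => by simpa using hdist 1 3 hc
  have h01 : v 0 ≠ v 1 := fun hc => by simpa using hdist 0 1 hc
  have h03 : v 0 ≠ v 3 := fun hc => by simpa using hdist 0 3 hc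
  have h12 : v 1 ≠ v 2 := fun hc => by simpa using hdist 1 2 hc
  have h23 : v 2 ≠ v 3 := fun hc => by simpa using hdist 2 3 hc
  rcases hv0 : v 0 with _ | ⟨a0, b0⟩ <;> rcases hv1 : v 1 with _ | ⟨a1, b1⟩ <;>
    rcases hv2 : v 2 with _ | ⟨a2, b2⟩ <;> rcases hv3 : v 3 with _ | ⟨a3, b3⟩ <;>
    rw [hv0, hv1] at E01 h01 <;> rw [hv1, hv2] at E12 h12 <;>
    rw [hv2, hv3] at E23 h23 <;> rw [hv3, hv0] at E30 <;>
    rw [hv0, hv2] at h02 <;> rw [hv1, hv3] at h13 <;> rw [hv0, hv3] at h03 <;>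
    simp only [hcol] at E01 E12 E23 E30
  · exact h01 rfl
  · exact h01 rfl
  · exact h01 rfl
  · exact h01 rfl
  · exact h02 rfl
  · exact h02 rfl
  · exact h03 rfl
  · -- v0 = none, rest some
    apply h13
    have ha : a1 = a3 := by rw [E01, E30]
    have hb : b1 = b3 := by linear_combination E12 - E23 + a2 * ha
    rw [ha, hb]
  · exact h12 rfl
  · exact h12 rfl
  · exact h13 rfl
  · -- v1 = none
    apply h02
    have ha : a0 = a2 := by rw [E01, E12]
    have hb : b0 = b2 := by linear_combination E30 - E23 + a3 * ha
    rw [ha, hb]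
  · exact h23 rfl
  · -- v2 = none
    apply h13
    have ha : a1 = a3 := by rw [E12, E23]
    have hb : b1 = b3 := by linear_combination E01 - E30 + a0 * ha
    rw [ha, hb]
  · -- v3 = none
    apply h02
    have ha : a0 = a2 := by rw [E30, E23]
    have hb : b0 = b2 := by linear_combination E01 - E12 + a1 * ha
    rw [ha, hb]
  · -- all some
    by_cases hc : a0 = a2
    · apply h02
      have hb : b0 = b2 := by linear_combination E01 - E12 + a1 * hc
      rw [hc, hb]
    · apply h13
      have hprod : (a1 - a3) * (a0 - a2) = 0 := by
        linear_combination E12 + E30 - E01 - E23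
      have ha : a1 = a3 := by
        rcases mul_eq_zero.mp hprod with h' | h'
        · exact sub_eq_zero.mp h'
        · exact absurd (sub_eq_zero.mp h') hc
      have hb : b1 = b3 := by linear_combination E01 - E30 + a0 * ha
      rw [ha, hb]

lemma c4_of_bip {k N : ℕ} (h : IsRamseyFor (completeBipartiteGraph (Fin 2) (Fin (1 + 1))) k N) :
    IsRamseyFor (SimpleGraph.cycleGraph 4) k N := by
  intro c
  obtain ⟨i, φ, hinj, hmono⟩ := h c
  set ψ : Fin 4 → Fin 2 ⊕ Fin (1 + 1) :=
    ![Sum.inl 0, Sum.inr 0, Sum.inl 1, Sum.inr 1] with hψ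
  have hψinj : Function.Injective ψ := by decide
  have hψadj : ∀ u v : Fin 4, (SimpleGraph.cycleGraph 4).Adj u v →
      (completeBipartiteGraph (Fin 2) (Fin (1 + 1))).Adj (ψ u) (ψ v) := by
    intro u v huv
    fin_cases u <;> fin_cases v <;>
      first
        | exact absurd huv (by decide)
        | simp [hψ]
  exact ⟨i, φ ∘ ψ, hinj.comp hψinj, fun u v huv => hmono (ψ u) (ψ v) (hψadj u v huv)⟩


/-- Lower and upper bounds on multicolor Ramsey numbers: `r_k(K_{2,t+1}) ≥ t k² + 1` when
`t` and `k` are powers of the same prime `p`; `r_k(K_{2,t+1}) ≤ t k² + k + 2` for all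
positive integers `k, t`; and `r_k(C₄) ≥ k² + 2` for every prime power `k`. -/
theorem statement_19 (p t k : ℕ) (hp : p.Prime)
    (ht : ∃ a : ℕ, t = p ^ a) (hk : ∃ b : ℕ, k = p ^ b) :
    t * k ^ 2 + 1 ≤ multiRamsey (completeBipartiteGraph (Fin 2) (Fin (t + 1))) k ∧
    (∀ k' t' : ℕ, 0 < k' → 0 < t' →
      multiRamsey (completeBipartiteGraph (Fin 2) (Fin (t' + 1))) k' ≤
        t' * k' ^ 2 + k' + 2) ∧
    (∀ k' : ℕ, IsPrimePow k' →
      k' ^ 2 + 2 ≤ multiRamsey (SimpleGraph.cycleGraph 4) k') := by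
  obtain ⟨a, rfl⟩ := ht
  obtain ⟨b, rfl⟩ := hk
  refine ⟨?_, ?_, ?_⟩
  · -- first lower bound
    have h1 : 0 < p ^ a := pow_pos hp.pos a
    have h2 : 0 < p ^ b := pow_pos hp.pos b
    apply le_csInf ⟨_, upper_bound (p ^ b) (p ^ a) h2 h1⟩
    intro M hM
    by_contra hlt
    push_neg at hlt
    rcases Nat.eq_zero_or_pos (a + b) with hab | hab
    · -- degenerate case : t = k = 1, M ≤ 1
      have ha : a = 0 := by omega
      have hb : b = 0 := by omega
      subst ha; subst hb
      obtain ⟨i, φ, hinj, -⟩ := hM (fun _ => ⟨0, pow_pos hp.pos 0⟩)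
      have hc := Fintype.card_le_of_injective φ hinj
      simp only [Fintype.card_sum, Fintype.card_fin, pow_zero] at hc
      simp only [pow_zero, one_mul, one_pow] at hlt
      omega
    · exact lower_bipartite p a b hp (by omega)
        (isRamseyFor_mono hM (by omega))
  · intro k' t' hk' ht'
    exact Nat.sInf_le (upper_bound k' t' hk' ht')
  · intro k' hk'
    obtain ⟨q, m, hq, hm, rfl⟩ := hk'
    have hq' : q.Prime := hq.nat_prime
    have hpos : 0 < q ^ m := pow_pos hq'.pos m
    have hne : IsRamseyFor (SimpleGraph.cycleGraph 4) (q ^ m) (1 * (q ^ m) ^ 2 + q ^ m + 2) :=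
      c4_of_bip (upper_bound (q ^ m) 1 hpos one_pos)
    apply le_csInf ⟨_, hne⟩
    intro M hM
    by_contra hlt
    push_neg at hlt
    exact lower_C4 q m hq' (by omega) (isRamseyFor_mono hM (by omega))
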